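/- Let F be holomorphic in a neighbourhood of the rectangle [-1,1] + i[-c₋, c₊] for fixed c₋, c₊ > 0. Suppose log|F(ζ)| ≤ M on the whole rectangle, and |F(ζ)| ≤ α + γ/Im ζ for ζ ∈ [-1,1] + i(0, c₊]. Then for any ε with γ M^{3/2}/α ≪ ε^{5/2} ≪ 1 (i.e. there exist absolute constants making the comparisons quantitative), one has |F(0)| ≤ (1+ε)α. -/

import Mathlib

open Set

set_option maxHeartbeats 1000000 in
/-- Three-line lemma with parameters (Lemma 8.4 of Nonnenmacher–Zworski):
if `F` is holomorphic near the rectangle `[-1,1] + i[-c₋,c₊]`, `log |F| ≤ M` on the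
rectangle and `|F(ζ)| ≤ α + γ/Im ζ` in the upper part, then for any `ε` with
`γ M^{3/2}/α ≪ ε^{5/2} ≪ 1` one has `|F(0)| ≤ (1+ε)α`. -/
theorem stmt0 (cm cp : ℝ) (hcm : 0 < cm) (hcp : 0 < cp) :
    ∃ K : ℝ, 0 < K ∧
      ∀ (M α γ ε : ℝ) (F : ℂ → ℂ),
        (∃ U : Set ℂ, IsOpen U ∧
            {ζ : ℂ | ζ.re ∈ Icc (-1 : ℝ) 1 ∧ ζ.im ∈ Icc (-cm) cp} ⊆ U ∧
            DifferentiableOn ℂ F U) →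
        (∀ ζ : ℂ, ζ.re ∈ Icc (-1 : ℝ) 1 → ζ.im ∈ Icc (-cm) cp →
          Real.log (‖F ζ‖) ≤ M) →
        (∀ ζ : ℂ, ζ.re ∈ Icc (-1 : ℝ) 1 → ζ.im ∈ Ioc 0 cp →
          ‖F ζ‖ ≤ α + γ / ζ.im) →
        1 ≤ M → 1 ≤ α → 0 < γ → 0 < ε →
        K * (γ * M ^ ((3 : ℝ) / 2) / α) ≤ ε ^ ((5 : ℝ) / 2) →
        K * ε ^ ((5 : ℝ) / 2) ≤ 1 →
        ‖F 0‖ ≤ (1 + ε) * α := by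
  refine ⟨4000 + (1 + 1/cm)^5 + (1 + 1/cp)^5, by positivity, ?_⟩
  set K : ℝ := 4000 + (1 + 1/cm)^5 + (1 + 1/cp)^5 with hKdef
  intro M α γ ε F hF hM hup hM1 hα1 hγ hε hKγ hKε
  have hcm5 : (1 + 1/cm)^5 ≤ K := by
    have h2 : (0:ℝ) ≤ (1 + 1/cp)^5 := by positivity
    simp only [hKdef]; linarith
  have hcp5 : (1 + 1/cp)^5 ≤ K := by
    have h2 : (0:ℝ) ≤ (1 + 1/cm)^5 := by positivity
    simp only [hKdef]; linarith
  have hK4 : (4000:ℝ) ≤ K := by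
    have h1 : (0:ℝ) ≤ (1 + 1/cm)^5 := by positivity
    have h2 : (0:ℝ) ≤ (1 + 1/cp)^5 := by positivity
    simp only [hKdef]; linarith
  clear_value K
  have hαpos : (0:ℝ) < α := by linarith
  have hMpos : (0:ℝ) < M := by linarith
  have hKpos : (0:ℝ) < K := by linarith
  have hε52pos : (0:ℝ) < ε ^ ((5:ℝ)/2) := Real.rpow_pos_of_pos hε _
  have hε52le : ε ^ ((5:ℝ)/2) ≤ 1/K := by
    rw [le_div_iff₀ hKpos]; linarith [hKε]
  have hε1 : ε ≤ 1 := by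
    by_contra h
    push_neg at h
    have h2 : (1:ℝ) < ε ^ ((5:ℝ)/2) :=
      (Real.one_lt_rpow_iff_of_pos hε).2 (Or.inl ⟨h, by norm_num⟩)
    have : (1:ℝ)/K ≤ 1/4000 := by
      apply one_div_le_one_div_of_le <;> linarith
    linarith
  -- sqrt ε ≤ cm and ≤ cp
  have hsq : ∀ c : ℝ, 0 < c → (1 + 1/c)^5 ≤ K → Real.sqrt ε ≤ c := by
    intro c hc hcK
    have h1 : (1/c)^5 ≤ K := by
      have : (1/c)^5 ≤ (1 + 1/c)^5 := by
        apply pow_le_pow_left₀ (by positivity); linarith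
      linarith
    have h2 : ε ^ ((5:ℝ)/2) ≤ c^5 := by
      have hc5 : (0:ℝ) < c^5 := by positivity
      have : (1:ℝ)/K ≤ c^5 := by
        rw [div_le_iff₀ hKpos]
        have : (1:ℝ) = c^5 * (1/c)^5 := by field_simp
        rw [this]
        exact mul_le_mul_of_nonneg_left h1 hc5.le
      linarith
    have h3 : (Real.sqrt ε)^5 ≤ c^5 := by
      have : (Real.sqrt ε)^5 = ε ^ ((5:ℝ)/2) := by
        rw [Real.sqrt_eq_rpow, ← Real.rpow_natCast (ε ^ ((1:ℝ)/2)) 5,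
          ← Real.rpow_mul hε.le]
        norm_num
      rw [this]; exact h2
    exact le_of_pow_le_pow_left₀ (by norm_num) hc.le h3
  have hscm : Real.sqrt ε ≤ cm := hsq cm hcm hcm5
  have hscp : Real.sqrt ε ≤ cp := hsq cp hcp hcp5
  -- basic quantities
  set SM : ℝ := Real.sqrt M with hSM
  set Sε : ℝ := Real.sqrt ε with hSε
  have hSMpos : 0 < SM := Real.sqrt_pos.2 hMpos
  have hSM1 : 1 ≤ SM := by
    rw [hSM, show (1:ℝ) = Real.sqrt 1 by simp]
    exact Real.sqrt_le_sqrt hM1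
  have hSεpos : 0 < Sε := Real.sqrt_pos.2 hε
  have hSM2 : SM^2 = M := Real.sq_sqrt hMpos.le
  have hSε2 : Sε^2 = ε := Real.sq_sqrt hε.le
  have hSε1 : Sε ≤ 1 := by
    rw [hSε, show (1:ℝ) = Real.sqrt 1 by simp]
    exact Real.sqrt_le_sqrt hε1
  clear_value SM Sε
  have hSMne : SM ≠ 0 := ne_of_gt hSMpos
  set d : ℝ := Sε / (10 * SM) with hddef
  have hdpos : 0 < d := by rw [hddef]; exact div_pos hSεpos (by positivity)
  have hdSε : d ≤ Sε := by
    rw [hddef, div_le_iff₀ (by positivity : (0:ℝ) < 10 * SM)]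
    linarith [mul_le_mul_of_nonneg_left hSM1 hSεpos.le, mul_nonneg hSεpos.le hSMpos.le]
  clear_value d
  have hdne : d ≠ 0 := ne_of_gt hdpos
  set e : ℝ := ε * d / (100 * M) with hedef
  have hepos : 0 < e := by
    rw [hedef]; exact div_pos (mul_pos hε hdpos) (by positivity)
  clear_value e
  have hene : e ≠ 0 := ne_of_gt hepos
  have hd2 : d^2 = ε / (100 * M) := by
    rw [hddef]; field_simp; rw [← hSε2, ← hSM2]; ring
  have h3Md2 : 3 * M * d^2 = 3 * ε / 100 := by
    rw [hd2]; field_simp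
  have hdcm : d ≤ cm := hdSε.trans hscm
  have hed : e ≤ d := by
    rw [hedef, div_le_iff₀ (by positivity)]
    have h1 : ε * d ≤ d := by linarith [mul_nonneg hdpos.le (sub_nonneg.2 hε1)]
    have h2 : d ≤ d * (100 * M) := by linarith [mul_nonneg hdpos.le (sub_nonneg.2 hM1)]
    linarith
  have hecp : e ≤ cp := hed.trans (hdSε.trans hscp)
  set a : ℝ := -(2 * M) / d with hadef
  clear_value a
  have had : a * d = -(2 * M) := by
    rw [hadef]; field_simp
  have hae : a * e = -(ε / 50) := by
    rw [hadef, hedef]; field_simp; ring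
  have h3Me2 : 3 * M * e^2 ≤ ε / 100 := by
    have he2 : e^2 = ε^3 / (1000000 * M^3) := by
      rw [hedef, div_pow, mul_pow, hd2]; field_simp; ring
    have hε3 : ε^3 ≤ ε := by
      have k1 : 0 ≤ ε*ε*(1-ε) := mul_nonneg (mul_nonneg hε.le hε.le) (sub_nonneg.2 hε1)
      have k2 : 0 ≤ ε*(1-ε) := mul_nonneg hε.le (sub_nonneg.2 hε1)
      nlinarith [k1, k2]
    have hM2 : (1:ℝ) ≤ M^2 := one_le_pow₀ hM1
    have h1 : ε ≤ ε * M^2 := by linarith [mul_le_mul_of_nonneg_left hM2 hε.le]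
    rw [he2, show 3*M*(ε^3/(1000000*M^3)) = 3*ε^3/(1000000*M^2) from by field_simp,
      div_le_div_iff₀ (by positivity) (by norm_num : (0:ℝ) < 100)]
    linarith [hε3, h1, mul_nonneg hε.le (sq_nonneg M)]
  -- auxiliary function
  set g : ℂ → ℂ := fun ζ => Complex.exp ((-(3*M) : ℝ) * ζ^2 + (a:ℝ) * Complex.I * ζ) with hgdef
  clear_value g
  have habs : ∀ ζ : ℂ, ‖g ζ‖ =
      Real.exp (-(3*M) * (ζ.re^2 - ζ.im^2) - a * ζ.im) := by
    intro ζ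
    rw [hgdef]
    simp only [Complex.norm_exp]
    congr 1
    simp [Complex.add_re, Complex.mul_re, Complex.mul_im, Complex.I_re, Complex.I_im,
      Complex.ofReal_re, Complex.ofReal_im, pow_two]
    ring
  have hgdiff : Differentiable ℂ g := by
    rw [hgdef]
    apply Differentiable.cexp
    fun_prop
  obtain ⟨U, hUopen, hUsub, hFdiff⟩ := hF
  -- the small rectangle
  set R : Set ℂ := Ioo (-1:ℝ) 1 ×ℂ Ioo (-d) e with hRdef
  clear_value R
  have hclosR : closure R = Icc (-1:ℝ) 1 ×ℂ Icc (-d) e := by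
    rw [hRdef, Complex.closure_reProdIm, closure_Ioo (by norm_num : (-1:ℝ) ≠ 1),
      closure_Ioo (by linarith : -d ≠ e)]
  have hsubU : closure R ⊆ U := by
    rw [hclosR]
    intro z hz
    rw [Complex.mem_reProdIm] at hz
    apply hUsub
    exact ⟨hz.1, ⟨by linarith [hz.2.1], by linarith [hz.2.2]⟩⟩
  have hFexp : ∀ ζ : ℂ, ζ.re ∈ Icc (-1:ℝ) 1 → ζ.im ∈ Icc (-cm) cp →
      ‖F ζ‖ ≤ Real.exp M := by
    intro ζ h1 h2
    rcases eq_or_lt_of_le (norm_nonneg (F ζ)) with h | h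
    · rw [← h]; positivity
    · exact (Real.log_le_iff_le_exp h).1 (hM ζ h1 h2)
  -- bound γ/e
  have hγe : γ / e ≤ ε * α / 4 := by
    have h1 : K * (γ * M ^ ((3:ℝ)/2)) ≤ ε ^ ((5:ℝ)/2) * α := by
      rw [← div_le_iff₀ hαpos, mul_div_assoc]
      exact hKγ
    have hM32 : M ^ ((3:ℝ)/2) = M * SM := by
      rw [show (3:ℝ)/2 = 1 + 1/2 by norm_num, Real.rpow_add hMpos, Real.rpow_one,
        ← Real.sqrt_eq_rpow, ← hSM]
    have hε52 : ε ^ ((5:ℝ)/2) = ε^2 * Sε := by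
      rw [show (5:ℝ)/2 = 2 + 1/2 by norm_num, Real.rpow_add hε, ← Real.sqrt_eq_rpow,
        ← hSε, show (2:ℝ) = ((2:ℕ):ℝ) by norm_num, Real.rpow_natCast]
    rw [hM32, hε52] at h1
    have h2 : 4000 * (γ * (M * SM)) ≤ α * (ε^2 * Sε) := by
      have hγM : 0 ≤ γ * (M * SM) := mul_nonneg hγ.le (mul_pos hMpos hSMpos).le
      have := mul_le_mul_of_nonneg_right hK4 hγM
      linarith
    rw [div_le_iff₀ hepos]
    have heeq : e = ε * Sε / (1000 * (M * SM)) := by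
      rw [hedef, hddef]; field_simp; ring
    rw [heeq, show ε * α / 4 * (ε * Sε / (1000 * (M * SM)))
        = α * (ε^2 * Sε) / (4000 * (M * SM)) by ring, le_div_iff₀ (by positivity : (0:ℝ) < 4000 * (M * SM))]
    linarith [h2]
  -- exp bound for the top edge
  have hEbound : (1 + ε/4) * Real.exp (3*ε/100) ≤ 1 + ε := by
    have h1 : 1 - 3*ε/100 ≤ Real.exp (-(3*ε/100)) := by
      have := Real.add_one_le_exp (-(3*ε/100)); linarith
    have h2 : Real.exp (3*ε/100) * Real.exp (-(3*ε/100)) = 1 := by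
      rw [← Real.exp_add]; simp
    have h3 : Real.exp (3*ε/100) * (1 - 3*ε/100) ≤ 1 := by
      calc Real.exp (3*ε/100) * (1 - 3*ε/100)
          ≤ Real.exp (3*ε/100) * Real.exp (-(3*ε/100)) :=
            mul_le_mul_of_nonneg_left h1 (Real.exp_pos _).le
        _ = 1 := h2
    set E := Real.exp (3*ε/100) with hEdef
    have hEp : 0 < E := Real.exp_pos _
    linarith [mul_le_mul_of_nonneg_left h3 (by linarith : (0:ℝ) ≤ 1 + ε),
      mul_nonneg (mul_nonneg hε.le hEp.le) (sub_nonneg.2 hε1), mul_nonneg hε.le hEp.le]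
  -- boundary bound
  have hbound : ∀ z ∈ frontier R, ‖F z * g z‖ ≤ (1 + ε) * α := by
    intro z hz
    rw [hRdef, Complex.frontier_reProdIm, closure_Ioo (by norm_num : (-1:ℝ) ≠ 1),
      frontier_Ioo (by linarith : -d < e), closure_Ioo (by linarith : -d ≠ e),
      frontier_Ioo (by norm_num : (-1:ℝ) < 1)] at hz
    rw [norm_mul, habs]
    rcases hz with hz | hz
    · -- horizontal edges
      rw [Complex.mem_reProdIm] at hz
      obtain ⟨hre, him⟩ := hz
      rcases him with him | him
      · -- bottom edge: im = -d
        have h1 : ‖F z‖ ≤ Real.exp M :=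
          hFexp z hre ⟨by rw [him]; linarith, by rw [him]; nlinarith⟩
        calc ‖F z‖ * Real.exp (-(3*M) * (z.re^2 - z.im^2) - a * z.im)
            ≤ Real.exp M * Real.exp (-(3*M) * (z.re^2 - z.im^2) - a * z.im) :=
              mul_le_mul_of_nonneg_right h1 (Real.exp_pos _).le
          _ = Real.exp (M + (-(3*M) * (z.re^2 - z.im^2) - a * z.im)) := by
              rw [← Real.exp_add]
          _ ≤ Real.exp 0 := by
              apply Real.exp_le_exp.2
              rw [him]
              linarith [h3Md2, had, mul_nonneg hMpos.le (sq_nonneg z.re), hM1, hε1, hε.le]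
          _ = 1 := Real.exp_zero
          _ ≤ (1 + ε) * α := by linarith [hα1, mul_nonneg hε.le (sub_nonneg.2 hα1), hε.le]
      · -- top edge: im = e
        have h1 : ‖F z‖ ≤ α + γ / e := by
          have := hup z hre ⟨by rw [him]; exact hepos, by rw [him]; exact hecp⟩
          rwa [him] at this
        have h2 : Real.exp (-(3*M) * (z.re^2 - z.im^2) - a * z.im)
            ≤ Real.exp (3*ε/100) := by
          apply Real.exp_le_exp.2
          rw [him]
          linarith [h3Me2, hae, mul_nonneg hMpos.le (sq_nonneg z.re)]
        calc ‖F z‖ * Real.exp (-(3*M) * (z.re^2 - z.im^2) - a * z.im)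
            ≤ (α + γ / e) * Real.exp (3*ε/100) := by
              apply mul_le_mul h1 h2 (Real.exp_pos _).le
              have : (0:ℝ) < γ / e := div_pos hγ hepos
              linarith
          _ ≤ (α + ε * α / 4) * Real.exp (3*ε/100) := by
              apply mul_le_mul_of_nonneg_right _ (Real.exp_pos _).le
              linarith
          _ = α * ((1 + ε/4) * Real.exp (3*ε/100)) := by ring
          _ ≤ α * (1 + ε) := mul_le_mul_of_nonneg_left hEbound hαpos.le
          _ = (1 + ε) * α := by ring
    · -- vertical edges
      rw [Complex.mem_reProdIm] at hz
      obtain ⟨hre, him⟩ := hz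
      have hre2 : z.re^2 = 1 := by
        rcases hre with h | h <;> rw [h] <;> norm_num
      have h1 : ‖F z‖ ≤ Real.exp M := by
        apply hFexp z
        · rcases hre with h | h <;> rw [h] <;> norm_num
        · exact ⟨by linarith [him.1], by linarith [him.2, hed]⟩
      have him2 : z.im^2 ≤ d^2 := sq_le_sq' him.1 (le_trans him.2 hed)
      have hima : -(a * z.im) ≤ ε / 50 := by
        have hma : 0 < -a := by
          rw [hadef, neg_div, neg_neg]
          exact div_pos (by linarith) hdpos
        have h := mul_le_mul_of_nonneg_left him.2 hma.le
        linarith [hae, h]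
      calc ‖F z‖ * Real.exp (-(3*M) * (z.re^2 - z.im^2) - a * z.im)
          ≤ Real.exp M * Real.exp (-(3*M) * (z.re^2 - z.im^2) - a * z.im) :=
            mul_le_mul_of_nonneg_right h1 (Real.exp_pos _).le
        _ = Real.exp (M + (-(3*M) * (z.re^2 - z.im^2) - a * z.im)) := by
            rw [← Real.exp_add]
        _ ≤ Real.exp 0 := by
            apply Real.exp_le_exp.2
            rw [hre2]
            linarith [h3Md2, hima, mul_le_mul_of_nonneg_left him2 (by positivity : (0:ℝ) ≤ 3*M), hM1, hε1, hε.le]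
        _ = 1 := Real.exp_zero
        _ ≤ (1 + ε) * α := by linarith [hα1, mul_nonneg hε.le (sub_nonneg.2 hα1), hε.le]
  -- apply maximum principle
  have h0mem : (0:ℂ) ∈ closure R := by
    rw [hclosR, Complex.mem_reProdIm]
    refine ⟨?_, ?_⟩
    · simp only [Complex.zero_re, mem_Icc]
      constructor <;> norm_num
    · simp only [Complex.zero_im, mem_Icc]
      constructor <;> linarith
  have hdc : DiffContOnCl ℂ (fun ζ => F ζ * g ζ) R := by
    constructor
    · exact (hFdiff.mono (subset_closure.trans hsubU)).mul
        (hgdiff.differentiableOn)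
    · exact ((hFdiff.mono hsubU).continuousOn.mul
        (hgdiff.continuous.continuousOn))
  have hRbdd : Bornology.IsBounded R := by
    rw [hRdef]
    exact (Metric.isBounded_Ioo _ _).reProdIm (Metric.isBounded_Ioo _ _)
  have hmain := Complex.norm_le_of_forall_mem_frontier_norm_le hRbdd hdc hbound h0mem
  have hg0 : g 0 = 1 := by
    rw [hgdef]; simp
  rw [hg0, mul_one] at hmain
  exact hmain
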